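/- Let f be a degree-d covering of the open annulus A (|d|>1) semiconjugate to m_d via h, and let p, q be fixed points of f. The following are equivalent: (1) there is an arc γ from p to q such that for every n > 0 the lift γₙ of γ by fⁿ starting at p ends at q; (2) there is an arc γ from p to q with f(γ) homotopic to γ relative to endpoints; (3) h(p) = h(q). -/

import Mathlib

noncomputable section

abbrev S1 := AddCircle (1 : ℝ)

def proj : ℝ → S1 := fun x => (x : S1)

def md (d : ℤ) : S1 → S1 := fun z => d • z

abbrev Ann := Set.Ioo (0 : ℝ) 1 × S1

abbrev AnnCov := Set.Ioo (0 : ℝ) 1 × ℝ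

def aproj : AnnCov → Ann := fun p => (p.1, proj p.2)

/-- A connector: a closed connected subset of the annulus accumulating on both
boundary components. -/
def IsConnector (C : Set Ann) : Prop :=
  IsClosed C ∧ IsConnected C ∧
    ∀ r : ℝ, 0 < r → (∃ p ∈ C, (p.1 : ℝ) < r) ∧ (∃ p ∈ C, (1 - r : ℝ) < p.1)

/-- A trivial (non-essential) connector: a connector disjoint from some other
connector. -/
def IsTrivialConnector (C : Set Ann) : Prop :=
  IsConnector C ∧ ∃ C', IsConnector C' ∧ Disjoint C C'

/-- `f` is a (covering) map of the annulus of degree `d`, witnessed by a lift. -/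
def HasDegree (f : Ann → Ann) (d : ℤ) : Prop :=
  ∃ F : AnnCov → AnnCov, Continuous F ∧ (∀ p, aproj (F p) = f (aproj p)) ∧
    ∀ (x : Set.Ioo (0:ℝ) 1) (y : ℝ),
      (F (x, y + 1)).1 = (F (x, y)).1 ∧ (F (x, y + 1)).2 = (F (x, y)).2 + d

/-- `f` is semiconjugate to `m_d` on the circle: there is a continuous
`h : A → S¹` with `h∘f = m_d∘h` inducing an isomorphism on `π₁` (it lifts to
`H` with `H(x,y+1) = H(x,y) ± 1`). -/
def SemiconjToMd (f : Ann → Ann) (d : ℤ) : Prop :=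
  ∃ h : Ann → S1, Continuous h ∧ (∀ a, h (f a) = md d (h a)) ∧
    ∃ e : ℤ, (e = 1 ∨ e = -1) ∧ ∃ H : AnnCov → ℝ, Continuous H ∧
      (∀ p, proj (H p) = h (aproj p)) ∧
      ∀ (x : Set.Ioo (0:ℝ) 1) (y : ℝ), H (x, y + 1) = H (x, y) + e

namespace Annulus15

open Set

open Set

/-! ### clamp -/

def clamp (a b x : ℝ) : ℝ := max a (min b x)

lemma continuous_clamp (a b : ℝ) : Continuous (clamp a b) :=
  continuous_const.max (continuous_const.min continuous_id)

lemma clamp_mem {a b : ℝ} (hab : a ≤ b) (x : ℝ) : clamp a b x ∈ Icc a b :=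
  ⟨le_max_left _ _, max_le hab (min_le_left _ _)⟩

lemma clamp_of_mem {a b x : ℝ} (h1 : a ≤ x) (h2 : x ≤ b) : clamp a b x = x := by
  rw [clamp, min_eq_right h2, max_eq_right h1]

lemma clamp_clamp (a b x : ℝ) (hab : a ≤ b) : clamp a b (clamp a b x) = clamp a b x :=
  clamp_of_mem (clamp_mem hab x).1 (clamp_mem hab x).2

lemma clamp_right_of_le {a b b' x : ℝ} (hb : b ≤ b') (hx : x ≤ b) :
    clamp a b' x = clamp a b x := by
  rw [clamp, clamp, min_eq_right hx, min_eq_right (hx.trans hb)]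

lemma clamp_left_of_ge {a b x : ℝ} (ha : 0 ≤ a) (hab : a ≤ b) (hx : a ≤ x) :
    clamp a b x = clamp 0 b x := by
  rw [clamp, clamp, max_eq_right (le_min (ha.trans hab) (ha.trans hx)),
    max_eq_right (le_min hab hx)]

/-! ### sheets -/

variable {E X : Type*} [TopologicalSpace E] [TopologicalSpace X] {f : E → X}

lemma sheet_lift {Y F : Type*} [TopologicalSpace Y] [TopologicalSpace F]
    (T : Bundle.Trivialization F f) (u : Y → X) (hu : Continuous u) (hmaps : ∀ y, u y ∈ T.baseSet)
    (pt : E) (hpt : f pt ∈ T.baseSet) :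
    ∃ S : Y → E, Continuous S ∧ (∀ y, f (S y) = u y) ∧ (∀ y, u y = f pt → S y = pt) := by
  refine ⟨fun y => T.toPartialHomeomorph.symm (u y, (T pt).2), ?_, ?_, ?_⟩
  · exact T.toPartialHomeomorph.continuousOn_symm.comp_continuous
      (hu.prodMk continuous_const) (fun y => T.mem_target.2 (hmaps y))
  · exact fun y => T.proj_symm_apply (T.mem_target.2 (hmaps y))
  · intro y hy
    have hsrc : pt ∈ T.source := T.mem_source.2 hpt
    have : (u y, (T pt).2) = T pt := by
      rw [hy]
      exact Prod.ext (T.coe_fst hsrc).symm rfl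
    show T.toPartialHomeomorph.symm (u y, (T pt).2) = pt
    rw [this]
    exact T.toPartialHomeomorph.left_inv hsrc

lemma sheet_lift_cov {Y : Type*} [TopologicalSpace Y] (hf : IsCoveringMap f) (x : X)
    (u : Y → X) (hu : Continuous u) (hmaps : ∀ y, u y ∈ (hf x).2.choose)
    (pt : E) (hpt : f pt ∈ (hf x).2.choose) :
    ∃ S : Y → E, Continuous S ∧ (∀ y, f (S y) = u y) ∧ (∀ y, u y = f pt → S y = pt) := by
  haveI : Nonempty (f ⁻¹' {x}) := ⟨((hf x).2.choose_spec.2.2.2.choose ⟨pt, hpt⟩).2⟩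
  exact sheet_lift (hf x).toTrivialization u hu hmaps pt hpt

/-! ### square lifting along a covering map -/

theorem liftSquare (hf : IsCoveringMap f) (G : ℝ × ℝ → X) (hG : Continuous G)
    (e₀ : E) (he₀ : f e₀ = G (0, 0)) (hbot : ∀ s, G (s, 0) = G (0, 0)) :
    ∃ L : ℝ × ℝ → E, Continuous L ∧
      (∀ y : ℝ × ℝ, f (L y) = G (clamp 0 1 y.1, clamp 0 1 y.2)) ∧
      (∀ s, L (s, 0) = e₀) := by
  classical
  obtain ⟨δ, δpos, hδ⟩ := lebesgue_number_lemma_of_metric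
    (isCompact_Icc.prod isCompact_Icc : IsCompact (Icc (0:ℝ) 1 ×ˢ Icc (0:ℝ) 1))
    (fun x : X => hG.isOpen_preimage _ (hf x).2.choose_spec.2.1)
    (fun y _ => mem_iUnion.2 ⟨G y, (hf (G y)).2.choose_spec.1⟩)
  obtain ⟨N, hNpos, hNδ⟩ : ∃ N : ℕ, 0 < N ∧ 1 / (N:ℝ) < δ := by
    obtain ⟨N₀, hN₀⟩ := exists_nat_one_div_lt δpos
    exact ⟨N₀ + 1, Nat.succ_pos _, by exact_mod_cast hN₀⟩
  have hN : (0:ℝ) < N := by exact_mod_cast hNpos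
  have key : ∀ j k : ℕ, ∃ x : X, j + 1 ≤ N → k + 1 ≤ N →
      ∀ y : ℝ × ℝ, y.1 ∈ Icc ((j:ℝ)/N) (((j:ℝ)+1)/N) → y.2 ∈ Icc ((k:ℝ)/N) (((k:ℝ)+1)/N) →
      G y ∈ (hf x).2.choose := by
    intro j k
    by_cases hjk : j + 1 ≤ N ∧ k + 1 ≤ N
    · obtain ⟨hj, hk⟩ := hjk
      have hcorner : (((j:ℝ)/N, (k:ℝ)/N) : ℝ × ℝ) ∈ Icc (0:ℝ) 1 ×ˢ Icc (0:ℝ) 1 := by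
        have hj1 : (j:ℝ) + 1 ≤ N := by exact_mod_cast hj
        have hk1 : (k:ℝ) + 1 ≤ N := by exact_mod_cast hk
        refine ⟨⟨by positivity, ?_⟩, ⟨by positivity, ?_⟩⟩
        · rw [div_le_one hN]; linarith
        · rw [div_le_one hN]; linarith
      obtain ⟨x, hx⟩ := hδ _ hcorner
      refine ⟨x, fun _ _ y hy1 hy2 => hx ?_⟩
      rw [Metric.mem_ball, Prod.dist_eq]
      have hstep : ((j:ℝ)+1)/N - (j:ℝ)/N = 1/N := by ring
      have hstep2 : ((k:ℝ)+1)/N - (k:ℝ)/N = 1/N := by ring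
      have h1 : dist y.1 ((j:ℝ)/N) < δ := by
        rw [Real.dist_eq, abs_of_nonneg (by linarith [hy1.1])]
        linarith [hy1.2]
      have h2 : dist y.2 ((k:ℝ)/N) < δ := by
        rw [Real.dist_eq, abs_of_nonneg (by linarith [hy2.1])]
        linarith [hy2.2]
      exact max_lt h1 h2
    · exact ⟨G (0,0), fun h1 h2 => absurd ⟨h1, h2⟩ hjk⟩
  choose xc hxc using key
  have hdd : ∀ m : ℕ, (m:ℝ)/N ≤ ((m:ℝ)+1)/N := fun m =>
    (div_le_div_iff_of_pos_right hN).2 (by linarith)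
  have hd0 : ∀ m : ℕ, (0:ℝ) ≤ (m:ℝ)/N := fun m => by positivity
  -- vertical strips
  have strip : ∀ j : ℕ, j + 1 ≤ N → ∃ S : ℝ × ℝ → E, Continuous S ∧
      (∀ y : ℝ × ℝ, f (S y) = G (clamp ((j:ℝ)/N) (((j:ℝ)+1)/N) y.1, clamp 0 1 y.2)) ∧
      (∀ s, S (s, 0) = e₀) := by
    intro j hj
    have hcjmem : ∀ s : ℝ, clamp ((j:ℝ)/N) (((j:ℝ)+1)/N) s ∈ Icc ((j:ℝ)/N) (((j:ℝ)+1)/N) :=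
      clamp_mem (hdd j)
    have step : ∀ k : ℕ, k + 1 ≤ N → ∃ S : ℝ × ℝ → E, Continuous S ∧
        (∀ y : ℝ × ℝ, f (S y) =
          G (clamp ((j:ℝ)/N) (((j:ℝ)+1)/N) y.1, clamp 0 (((k:ℝ)+1)/N) y.2)) ∧
        (∀ s, S (s, 0) = e₀) := by
      intro k
      induction k with
      | zero =>
        intro h1
        have hb1 : (0:ℝ) ≤ (((0:ℕ):ℝ)+1)/N := by positivity
        have hbase : ∀ y : ℝ × ℝ,
            G (clamp ((j:ℝ)/N) (((j:ℝ)+1)/N) y.1, clamp 0 ((((0:ℕ):ℝ)+1)/N) y.2)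
              ∈ (hf (xc j 0)).2.choose := by
          intro y
          refine hxc j 0 hj h1 _ (hcjmem y.1) ?_
          have := clamp_mem hb1 y.2
          simpa using this
        have hpt : f e₀ ∈ (hf (xc j 0)).2.choose := by
          have h00 : G ((((j:ℝ)/N, 0)) : ℝ × ℝ) = G (0, 0) := hbot _
          rw [he₀, ← h00]
          refine hxc j 0 hj h1 _ ⟨le_refl _, hdd j⟩ ?_
          simp only [Nat.cast_zero, zero_div]
          exact ⟨le_refl _, by positivity⟩
        obtain ⟨S, hSc, hSf, hSpt⟩ := sheet_lift_cov hf (xc j 0)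
          (fun y : ℝ × ℝ =>
            G (clamp ((j:ℝ)/N) (((j:ℝ)+1)/N) y.1, clamp 0 ((((0:ℕ):ℝ)+1)/N) y.2))
          (hG.comp (((continuous_clamp _ _).comp continuous_fst).prodMk
            ((continuous_clamp _ _).comp continuous_snd)))
          hbase e₀ hpt
        refine ⟨S, hSc, fun y => hSf y, fun s => ?_⟩
        apply hSpt
        show G (_, clamp 0 ((((0:ℕ):ℝ)+1)/N) (((s, (0:ℝ)) : ℝ × ℝ)).2) = f e₀
        have hc0 : clamp 0 ((((0:ℕ):ℝ)+1)/N) (0:ℝ) = 0 := clamp_of_mem le_rfl hb1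
        show G (_, clamp 0 ((((0:ℕ):ℝ)+1)/N) (0:ℝ)) = f e₀
        rw [hc0, hbot, he₀]
      | succ k IH =>
        intro h2
        obtain ⟨S, hSc, hSf, hS0⟩ := IH (by omega)
        have hτ0 : (0:ℝ) ≤ ((k:ℝ)+1)/N := by positivity
        have hττ : ((k:ℝ)+1)/N ≤ (((k:ℝ)+1)+1)/N := by
          apply (div_le_div_iff_of_pos_right hN).2; linarith
        have hfpt : f (S (((j:ℝ)/N, ((k:ℝ)+1)/N) : ℝ × ℝ))
            = G ((((j:ℝ)/N, ((k:ℝ)+1)/N)) : ℝ × ℝ) := by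
          rw [hSf]
          simp only
          rw [clamp_of_mem le_rfl (hdd j), clamp_of_mem hτ0 le_rfl]
        have hcast : (((k:ℕ)+1:ℕ):ℝ) = (k:ℝ)+1 := by push_cast; ring
        have hsq : ∀ y : ℝ × ℝ,
            G (clamp ((j:ℝ)/N) (((j:ℝ)+1)/N) y.1, clamp (((k:ℝ)+1)/N) ((((k:ℝ)+1)+1)/N) y.2)
              ∈ (hf (xc j (k+1))).2.choose := by
          intro y
          refine hxc j (k+1) hj h2 _ (hcjmem y.1) ?_
          rw [hcast]
          exact clamp_mem hττ y.2
        have hpt2 : f (S (((j:ℝ)/N, ((k:ℝ)+1)/N) : ℝ × ℝ))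
            ∈ (hf (xc j (k+1))).2.choose := by
          rw [hfpt]
          refine hxc j (k+1) hj h2 _ ⟨le_refl _, hdd j⟩ ?_
          rw [hcast]
          exact ⟨le_refl _, hττ⟩
        obtain ⟨S₂, hS₂c, hS₂f, hS₂pt⟩ := sheet_lift_cov hf (xc j (k+1))
          (fun y : ℝ × ℝ =>
            G (clamp ((j:ℝ)/N) (((j:ℝ)+1)/N) y.1, clamp (((k:ℝ)+1)/N) ((((k:ℝ)+1)+1)/N) y.2))
          (hG.comp (((continuous_clamp _ _).comp continuous_fst).prodMk
            ((continuous_clamp _ _).comp continuous_snd)))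
          hsq _ hpt2
        have hagree : (fun s : ℝ => S ((s, ((k:ℝ)+1)/N) : ℝ × ℝ))
            = fun s : ℝ => S₂ ((s, ((k:ℝ)+1)/N) : ℝ × ℝ) := by
          refine hf.eq_of_comp_eq
            (hSc.comp (continuous_id.prodMk continuous_const))
            (hS₂c.comp (continuous_id.prodMk continuous_const))
            (funext fun s => ?_) ((j:ℝ)/(N:ℝ)) ?_
          · show f (S _) = f (S₂ _)
            rw [hSf, hS₂f]
            simp only
            rw [clamp_of_mem hτ0 le_rfl, clamp_of_mem le_rfl hττ]
          · show S _ = S₂ _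
            refine (hS₂pt (((j:ℝ)/N, ((k:ℝ)+1)/N) : ℝ × ℝ) ?_).symm
            simp only
            rw [clamp_of_mem le_rfl (hdd j), clamp_of_mem le_rfl hττ, hfpt]
        refine ⟨fun y : ℝ × ℝ => if y.2 ≤ ((k:ℝ)+1)/N then S y else S₂ y, ?_, ?_, ?_⟩
        · refine Continuous.if_le hSc hS₂c continuous_snd continuous_const ?_
          intro y hy
          have hh := congrFun hagree y.1
          rw [← hy, Prod.mk.eta] at hh
          exact hh
        · intro y
          by_cases hcase : y.2 ≤ ((k:ℝ)+1)/N
          · simp only [if_pos hcase]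
            rw [hSf, hcast]
            rw [clamp_right_of_le hττ hcase]
          · simp only [if_neg hcase]
            rw [hS₂f, hcast]
            rw [clamp_left_of_ge hτ0 hττ (le_of_not_ge hcase)]
        · intro s
          simp only [if_pos hτ0]
          exact hS0 s
    obtain ⟨M, hM⟩ : ∃ M : ℕ, N = M + 1 := ⟨N - 1, by omega⟩
    obtain ⟨S, h1, h2, h3⟩ := step M (by omega)
    have hone : (((M:ℕ):ℝ)+1)/N = 1 := by
      rw [div_eq_one_iff_eq hN.ne']
      rw [hM]; push_cast; ring
    refine ⟨S, h1, fun y => ?_, h3⟩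
    rw [h2, hone]
  -- glue strips horizontally
  have glue : ∀ j : ℕ, j + 1 ≤ N → ∃ W : ℝ × ℝ → E, Continuous W ∧
      (∀ y : ℝ × ℝ, f (W y) = G (clamp 0 (((j:ℝ)+1)/N) y.1, clamp 0 1 y.2)) ∧
      (∀ s, W (s, 0) = e₀) := by
    intro j
    induction j with
    | zero =>
      intro h1
      obtain ⟨S, hSc, hSf, hS0⟩ := strip 0 h1
      refine ⟨S, hSc, fun y => ?_, hS0⟩
      rw [hSf]
      norm_num
    | succ j IH =>
      intro h2
      obtain ⟨W, hWc, hWf, hW0⟩ := IH (by omega)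
      obtain ⟨S, hSc, hSf, hS0⟩ := strip (j+1) h2
      have hτ0 : (0:ℝ) ≤ ((j:ℝ)+1)/N := by positivity
      have hττ : ((j:ℝ)+1)/N ≤ (((j:ℝ)+1)+1)/N := by
        apply (div_le_div_iff_of_pos_right hN).2; linarith
      have hcast : (((j:ℕ)+1:ℕ):ℝ) = (j:ℝ)+1 := by push_cast; ring
      have hagree : (fun t : ℝ => W ((((j:ℝ)+1)/N, t) : ℝ × ℝ))
          = fun t : ℝ => S ((((j:ℝ)+1)/N, t) : ℝ × ℝ) := by
        refine hf.eq_of_comp_eq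
          (hWc.comp (continuous_const.prodMk continuous_id))
          (hSc.comp (continuous_const.prodMk continuous_id))
          (funext fun t => ?_) (0:ℝ) ?_
        · show f (W _) = f (S _)
          rw [hWf, hSf]
          simp only
          rw [hcast, clamp_of_mem hτ0 le_rfl, clamp_of_mem le_rfl hττ]
        · show W _ = S _
          rw [hW0, hS0]
      refine ⟨fun y : ℝ × ℝ => if y.1 ≤ ((j:ℝ)+1)/N then W y else S y, ?_, ?_, ?_⟩
      · refine Continuous.if_le hWc hSc continuous_fst continuous_const ?_
        intro y hy
        have hh := congrFun hagree y.2
        rw [← hy, Prod.mk.eta] at hh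
        exact hh
      · intro y
        by_cases hcase : y.1 ≤ ((j:ℝ)+1)/N
        · simp only [if_pos hcase]
          rw [hWf, hcast]
          rw [clamp_right_of_le hττ hcase]
        · simp only [if_neg hcase]
          rw [hSf, hcast]
          rw [clamp_left_of_ge hτ0 hττ (le_of_not_ge hcase)]
      · intro s
        by_cases hcase : s ≤ ((j:ℝ)+1)/N
        · simp only [if_pos hcase]; exact hW0 s
        · simp only [if_neg hcase]; exact hS0 s
  obtain ⟨M, hM⟩ : ∃ M : ℕ, N = M + 1 := ⟨N - 1, by omega⟩
  obtain ⟨W, h1, h2, h3⟩ := glue M (by omega)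
  have hone : (((M:ℕ):ℝ)+1)/N = 1 := by
    rw [div_eq_one_iff_eq hN.ne']
    rw [hM]; push_cast; ring
  refine ⟨W, h1, fun y => ?_, h3⟩
  rw [h2, hone]

/-! ### corollaries -/

def pr01 : ℝ → unitInterval := fun t => Set.projIcc 0 1 zero_le_one t

lemma continuous_pr01 : Continuous pr01 := continuous_projIcc (h := zero_le_one)

lemma pr01_coe (t : unitInterval) : pr01 (t : ℝ) = t := Set.projIcc_val zero_le_one t

lemma pr01_clamp (t : ℝ) : pr01 (clamp 0 1 t) = pr01 t := by
  apply Subtype.ext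
  show max 0 (min 1 (clamp 0 1 t)) = max 0 (min 1 t)
  show clamp 0 1 (clamp 0 1 t) = clamp 0 1 t
  exact clamp_clamp 0 1 t zero_le_one

lemma pr01_zero : pr01 0 = 0 := by rw [show ((0:ℝ)) = ((0 : unitInterval) : ℝ) by rfl, pr01_coe]

lemma pr01_one : pr01 1 = 1 := by rw [show ((1:ℝ)) = ((1 : unitInterval) : ℝ) by rfl, pr01_coe]

theorem liftPathR (hf : IsCoveringMap f) (γ : ℝ → X) (hγ : Continuous γ)
    (e₀ : E) (he₀ : f e₀ = γ 0) :
    ∃ Γ : ℝ → E, Continuous Γ ∧ (∀ t, f (Γ t) = γ (clamp 0 1 t)) ∧ Γ 0 = e₀ := by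
  obtain ⟨L, hLc, hLf, hL0⟩ := liftSquare hf (fun y : ℝ × ℝ => γ (clamp 0 1 y.2))
    (hγ.comp ((continuous_clamp 0 1).comp continuous_snd)) e₀
    (by simpa [clamp_of_mem (le_refl (0:ℝ)) zero_le_one] using he₀) (fun s => rfl)
  refine ⟨fun t => L (0, t), hLc.comp (continuous_const.prodMk continuous_id), fun t => ?_,
    hL0 0⟩
  rw [hLf]
  simp only
  rw [clamp_clamp _ _ _ zero_le_one]

/-- lifts of homotopic (rel endpoints) paths from the same initial point have the
same terminal point. -/
theorem lift_homotopic_end (hf : IsCoveringMap f) {x₀ x₁ : X} (p₁ p₂ : Path x₀ x₁)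
    (hhom : Path.Homotopic p₁ p₂) (Γ₁ Γ₂ : ℝ → E)
    (hc₁ : Continuous Γ₁) (hc₂ : Continuous Γ₂)
    (hl₁ : ∀ t, f (Γ₁ t) = p₁ (pr01 t)) (hl₂ : ∀ t, f (Γ₂ t) = p₂ (pr01 t))
    (h0 : Γ₁ 0 = Γ₂ 0) : Γ₁ 1 = Γ₂ 1 := by
  obtain ⟨hom⟩ := hhom
  have hG : Continuous (fun y : ℝ × ℝ => hom (pr01 y.1, pr01 y.2)) :=
    hom.continuous.comp ((continuous_pr01.comp continuous_fst).prodMk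
      (continuous_pr01.comp continuous_snd))
  have hb : ∀ s : ℝ, hom (pr01 s, pr01 0) = hom (pr01 0, pr01 0) := by
    intro s
    rw [pr01_zero, hom.eq_fst _ (by norm_num), hom.eq_fst _ (by norm_num)]
  obtain ⟨L, hLc, hLf, hL0⟩ := liftSquare hf (fun y : ℝ × ℝ => hom (pr01 y.1, pr01 y.2)) hG
    (Γ₁ 0) (by
      simp only
      rw [pr01_zero, hom.apply_zero, hl₁ 0, pr01_zero]; rfl) hb
  have hLf' : ∀ y : ℝ × ℝ, f (L y) = hom (pr01 y.1, pr01 y.2) := by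
    intro y
    rw [hLf]
    simp only
    rw [pr01_clamp, pr01_clamp]
  have hL1 : (fun t : ℝ => L (0, t)) = Γ₁ := by
    refine hf.eq_of_comp_eq (hLc.comp (continuous_const.prodMk continuous_id)) hc₁
      (funext fun t => ?_) (0:ℝ) (by rw [hL0])
    show f (L _) = f (Γ₁ t)
    rw [hLf', hl₁]
    simp only
    rw [pr01_zero, hom.apply_zero]
    rfl
  have hL2 : (fun t : ℝ => L (1, t)) = Γ₂ := by
    refine hf.eq_of_comp_eq (hLc.comp (continuous_const.prodMk continuous_id)) hc₂
      (funext fun t => ?_) (0:ℝ) (by rw [hL0, h0])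
    show f (L _) = f (Γ₂ t)
    rw [hLf', hl₂]
    simp only
    rw [pr01_one, hom.apply_one]
    rfl
  have htop : (fun s : ℝ => L (s, 1)) = fun _ : ℝ => L (0, 1) := by
    refine hf.eq_of_comp_eq (hLc.comp (continuous_id.prodMk continuous_const))
      (continuous_const) (funext fun s => ?_) (0:ℝ) rfl
    show f (L _) = f (L _)
    rw [hLf', hLf']
    simp only
    rw [pr01_one, hom.eq_snd _ (by norm_num), hom.eq_snd _ (by norm_num)]
  calc Γ₁ 1 = L (0, 1) := by rw [← hL1]
    _ = L (1, 1) := (congrFun htop 1).symm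
    _ = Γ₂ 1 := by rw [← hL2]


open Set

lemma continuous_proj : Continuous proj := continuous_coinduced_rng

lemma proj_eq_proj {x y : ℝ} : proj x = proj y ↔ ∃ k : ℤ, y = x + k := by
  constructor
  · intro hxy
    obtain ⟨k, hk⟩ := (QuotientAddGroup.eq_iff_sub_mem).1 hxy.symm
    have hk' : (k:ℝ) * 1 = y - x := by
      rw [← zsmul_eq_mul]
      exact hk
    exact ⟨k, by linarith⟩
  · rintro ⟨k, rfl⟩
    symm
    apply (QuotientAddGroup.eq_iff_sub_mem).2
    refine ⟨k, ?_⟩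
    show (k:ℤ) • (1:ℝ) = x + k - x
    rw [zsmul_eq_mul, mul_one]; ring

lemma proj_add_int (x : ℝ) (k : ℤ) : proj (x + k) = proj x :=
  (proj_eq_proj.2 ⟨k, rfl⟩).symm

lemma rep_val (a : ℝ) (y : ℝ) :
    ((AddCircle.equivIco 1 a (proj y)) : ℝ) = toIcoMod one_pos a y :=
  congrArg Subtype.val (QuotientAddGroup.equivIcoMod_coe one_pos a y)

lemma proj_rep (a : ℝ) (x : S1) : proj ((AddCircle.equivIco 1 a x : ℝ)) = x := by
  conv_rhs => rw [← (AddCircle.equivIco 1 a).symm_apply_apply x]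
  rfl

lemma rep_mem (a : ℝ) (x : S1) : (AddCircle.equivIco 1 a x : ℝ) ∈ Ico a (a + 1) :=
  (AddCircle.equivIco 1 a x).2

/-- The trivialization of `aproj` over the complement of the vertical line through `a`. -/
def trivAnn (a : ℝ) : Bundle.Trivialization ℤ aproj where
  toFun z := (aproj z, toIcoDiv one_pos a z.2)
  invFun q := (q.1.1, (AddCircle.equivIco 1 a q.1.2 : ℝ) + q.2)
  source := aproj ⁻¹' (univ ×ˢ {z : S1 | z ≠ proj a})
  target := (univ ×ˢ {z : S1 | z ≠ proj a}) ×ˢ univ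
  map_source' := fun z hz => ⟨hz, trivial⟩
  map_target' := by
    rintro q ⟨⟨-, hq⟩, -⟩
    simp only [mem_preimage]
    refine ⟨trivial, ?_⟩
    show proj ((AddCircle.equivIco 1 a q.1.2 : ℝ) + (q.2:ℝ)) ≠ proj a
    rw [proj_add_int, proj_rep]
    exact hq
  left_inv' := by
    rintro z hz
    show (_, _) = z
    have h2 : (AddCircle.equivIco 1 a (proj z.2) : ℝ) + (toIcoDiv one_pos a z.2 : ℝ) = z.2 := by
      rw [rep_val]
      have := toIcoMod_add_toIcoDiv_zsmul one_pos a z.2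
      rw [zsmul_eq_mul, mul_one] at this
      exact this
    exact Prod.ext rfl h2
  right_inv' := by
    rintro q ⟨⟨-, hq⟩, -⟩
    have hpr : proj ((AddCircle.equivIco 1 a q.1.2 : ℝ) + (q.2:ℝ)) = q.1.2 := by
      rw [proj_add_int, proj_rep]
    have hdiv : toIcoDiv one_pos a ((AddCircle.equivIco 1 a q.1.2 : ℝ) + (q.2:ℝ)) = q.2 := by
      have hmem : (AddCircle.equivIco 1 a q.1.2 : ℝ) + q.2 • (1:ℝ) - q.2 • (1:ℝ)
          ∈ Ico a (a + 1) := by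
        simp only [add_sub_cancel_right]
        exact rep_mem a q.1.2
      have := toIcoDiv_eq_of_sub_zsmul_mem_Ico one_pos hmem
      rw [zsmul_eq_mul, mul_one] at this
      exact this
    show ((_, proj _), _) = q
    rw [hpr, hdiv]
  open_source :=
    (isOpen_univ.prod isOpen_compl_singleton).preimage
      (continuous_fst.prodMk (continuous_proj.comp continuous_snd))
  open_target := (isOpen_univ.prod isOpen_compl_singleton).prod isOpen_univ
  continuousOn_toFun := by
    apply ContinuousOn.prodMk
    · apply Continuous.continuousOn
      exact (continuous_fst.prodMk (continuous_proj.comp continuous_snd))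
    · intro z hz
      apply ContinuousAt.continuousWithinAt
      have hz' : proj z.2 ≠ proj a := hz.2
      set m : ℤ := toIcoDiv one_pos a z.2 with hm
      have hmem : z.2 - (m:ℝ) ∈ Ico a (a + 1) := by
        have := sub_toIcoDiv_zsmul_mem_Ico one_pos a z.2
        rwa [zsmul_eq_mul, mul_one] at this
      have hne : z.2 - (m:ℝ) ≠ a := by
        intro hcontra
        apply hz'
        have : z.2 = a + m := by linarith
        rw [this, proj_add_int]
      have hmemo : z.2 - (m:ℝ) ∈ Ioo a (a + 1) := ⟨lt_of_le_of_ne hmem.1 (Ne.symm hne), hmem.2⟩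
      have hev : ∀ᶠ y : AnnCov in nhds z, toIcoDiv one_pos a y.2 = m := by
        have hU : IsOpen {y : AnnCov | y.2 - (m:ℝ) ∈ Ioo a (a + 1)} := by
          apply (isOpen_Ioo (a := a) (b := a+1)).preimage
          exact (continuous_snd.sub continuous_const)
        filter_upwards [hU.mem_nhds hmemo] with y hy
        apply toIcoDiv_eq_of_sub_zsmul_mem_Ico one_pos
        rw [zsmul_eq_mul, mul_one]
        exact Ioo_subset_Ico_self hy
      have hev' : (fun y : AnnCov => toIcoDiv one_pos a y.2) =ᶠ[nhds z] fun _ => m := hev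
      exact ContinuousAt.congr (continuousAt_const (y := m)) hev'.symm
  continuousOn_invFun := by
    intro q hq
    apply ContinuousAt.continuousWithinAt
    apply ContinuousAt.prodMk
    · exact (continuous_fst.comp continuous_fst).continuousAt
    · apply ContinuousAt.add
      · have h1 : ContinuousAt (AddCircle.equivIco 1 a) q.1.2 :=
          AddCircle.continuousAt_equivIco 1 a hq.1.2
        have h2 : ContinuousAt (fun q : Ann × ℤ => q.1.2) q := (continuous_fst.snd).continuousAt
        have h3 : ContinuousAt (fun q : Ann × ℤ => AddCircle.equivIco 1 a q.1.2) q :=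
          ContinuousAt.comp h1 h2
        exact ContinuousAt.comp (continuousAt_subtype_val) h3
      · exact ((continuous_of_discreteTopology (f := fun k : ℤ => (k:ℝ))).comp
          continuous_snd).continuousAt
  baseSet := univ ×ˢ {z : S1 | z ≠ proj a}
  open_baseSet := isOpen_univ.prod isOpen_compl_singleton
  source_eq := rfl
  target_eq := rfl
  proj_toFun := fun z _ => rfl

theorem isCoveringMap_aproj : IsCoveringMap aproj := by
  apply IsCoveringMap.mk aproj (fun _ => ℤ)
    (fun x => trivAnn ((Quotient.out x.2 : ℝ) + 1/2))
  intro x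
  set r : ℝ := Quotient.out x.2 with hr
  refine ⟨trivial, ?_⟩
  show x.2 ≠ proj (r + 1/2)
  have hx : proj r = x.2 := Quotient.out_eq x.2
  rw [← hx]
  intro hcontra
  obtain ⟨k, hk⟩ := proj_eq_proj.1 hcontra
  have h2k : (2 * k : ℤ) = (1 : ℤ) := by
    have : (2 * (k:ℝ)) = 1 := by
      have : r + 1/2 = r + (k:ℝ) := hk
      linarith
    exact_mod_cast this
  omega


instance : PreconnectedSpace (Set.Ioo (0:ℝ) 1) :=
  Subtype.preconnectedSpace isPreconnected_Ioo

lemma int_valued_const {Y : Type*} [TopologicalSpace Y] [PreconnectedSpace Y]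
    (u : Y → ℝ) (hu : Continuous u) (hz : ∀ y, ∃ k : ℤ, u y = k) (y₁ y₂ : Y) :
    u y₁ = u y₂ := by
  by_contra hne
  obtain ⟨k₁, hk₁⟩ := hz y₁
  obtain ⟨k₂, hk₂⟩ := hz y₂
  have main : ∀ (a b : Y) (ka kb : ℤ), u a = ka → u b = kb → u a < u b → False := by
    intro a b ka kb ha hb hab
    have hk : ka < kb := by
      have : (ka:ℝ) < kb := by rw [← ha, ← hb]; exact hab
      exact_mod_cast this
    have hmem : ((ka:ℝ) + 1/2) ∈ Icc (u a) (u b) := by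
      constructor
      · rw [ha]; linarith
      · rw [hb]
        have : (ka:ℝ) + 1 ≤ kb := by exact_mod_cast hk
        linarith
    obtain ⟨y₃, hy₃⟩ := intermediate_value_univ a b hu hmem
    obtain ⟨k₃, hk₃⟩ := hz y₃
    rw [hk₃] at hy₃
    have : (2*k₃ : ℤ) = 2*ka + 1 := by
      have h2 : 2*(k₃:ℝ) = 2*ka + 1 := by linarith
      exact_mod_cast h2
    omega
  rcases lt_or_gt_of_ne hne with hlt | hlt
  exacts [main y₁ y₂ k₁ k₂ hk₁ hk₂ hlt, main y₂ y₁ k₂ k₁ hk₂ hk₁ hlt]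

lemma Ioo_combo {x y : ℝ} (hx : x ∈ Ioo (0:ℝ) 1) (hy : y ∈ Ioo (0:ℝ) 1)
    {b : ℝ} (hb0 : 0 ≤ b) (hb1 : b ≤ 1) : (1-b)*x + b*y ∈ Ioo (0:ℝ) 1 := by
  constructor
  · rcases le_total x y with hxy | hxy
    · nlinarith [hx.1]
    · nlinarith [hy.1]
  · rcases le_total x y with hxy | hxy
    · nlinarith [hy.2]
    · nlinarith [hx.2]

/-- clamped linear interpolation in `AnnCov` -/
def mix (b : ℝ) (z w : AnnCov) : AnnCov :=
  (⟨(1 - clamp 0 1 b) * (z.1:ℝ) + clamp 0 1 b * (w.1:ℝ),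
    Ioo_combo z.1.2 w.1.2 (clamp_mem zero_le_one b).1 (clamp_mem zero_le_one b).2⟩,
   (1 - clamp 0 1 b) * z.2 + clamp 0 1 b * w.2)

lemma mix_continuous {Y : Type*} [TopologicalSpace Y] {b : Y → ℝ} {z w : Y → AnnCov}
    (hb : Continuous b) (hz : Continuous z) (hw : Continuous w) :
    Continuous (fun y => mix (b y) (z y) (w y)) := by
  have c : Continuous (fun y => clamp 0 1 (b y)) := (continuous_clamp 0 1).comp hb
  apply Continuous.prodMk
  · apply Continuous.subtype_mk
    exact ((continuous_const.sub c).mul (hz.fst.subtype_val)).add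
      (c.mul (hw.fst.subtype_val))
  · exact ((continuous_const.sub c).mul hz.snd).add (c.mul hw.snd)

lemma clamp01_zero : clamp 0 1 (0:ℝ) = 0 := clamp_of_mem le_rfl zero_le_one

lemma clamp01_one : clamp 0 1 (1:ℝ) = 1 := clamp_of_mem zero_le_one le_rfl

lemma mix_zero (z w : AnnCov) : mix 0 z w = z := by
  have h1 : ((mix 0 z w).1 : ℝ) = z.1 := by
    show (1 - clamp 0 1 0) * (z.1:ℝ) + clamp 0 1 0 * (w.1:ℝ) = z.1
    rw [clamp01_zero]; ring
  have h2 : (mix 0 z w).2 = z.2 := by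
    show (1 - clamp 0 1 0) * z.2 + clamp 0 1 0 * w.2 = z.2
    rw [clamp01_zero]; ring
  exact Prod.ext (Subtype.ext h1) h2

lemma mix_one (z w : AnnCov) : mix 1 z w = w := by
  have h1 : ((mix 1 z w).1 : ℝ) = w.1 := by
    show (1 - clamp 0 1 1) * (z.1:ℝ) + clamp 0 1 1 * (w.1:ℝ) = w.1
    rw [clamp01_one]; ring
  have h2 : (mix 1 z w).2 = w.2 := by
    show (1 - clamp 0 1 1) * z.2 + clamp 0 1 1 * w.2 = w.2
    rw [clamp01_one]; ring
  exact Prod.ext (Subtype.ext h1) h2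

lemma mix_self (b : ℝ) (z : AnnCov) : mix b z z = z := by
  have h1 : ((mix b z z).1 : ℝ) = z.1 := by
    show (1 - clamp 0 1 b) * (z.1:ℝ) + clamp 0 1 b * (z.1:ℝ) = z.1
    ring
  have h2 : (mix b z z).2 = z.2 := by
    show (1 - clamp 0 1 b) * z.2 + clamp 0 1 b * z.2 = z.2
    ring
  exact Prod.ext (Subtype.ext h1) h2

lemma mix_clamp (b : ℝ) (z w : AnnCov) : mix (clamp 0 1 b) z w = mix b z w := by
  have hcc := clamp_clamp 0 1 b zero_le_one
  have h1 : ((mix (clamp 0 1 b) z w).1 : ℝ) = ((mix b z w).1 : ℝ) := by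
    show (1 - clamp 0 1 (clamp 0 1 b)) * (z.1:ℝ) + clamp 0 1 (clamp 0 1 b) * (w.1:ℝ) = _
    rw [hcc]; rfl
  have h2 : (mix (clamp 0 1 b) z w).2 = (mix b z w).2 := by
    show (1 - clamp 0 1 (clamp 0 1 b)) * z.2 + clamp 0 1 (clamp 0 1 b) * w.2 = _
    rw [hcc]; rfl
  exact Prod.ext (Subtype.ext h1) h2

lemma pr01_val (r : ℝ) : ((pr01 r : unitInterval) : ℝ) = clamp 0 1 r := rfl

lemma mix_pr (r : ℝ) (z w : AnnCov) : mix ((pr01 r : unitInterval) : ℝ) z w = mix r z w := by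
  rw [pr01_val, mix_clamp]

lemma aproj_shift (z : AnnCov) (k : ℤ) : aproj (z.1, z.2 + (k:ℝ)) = aproj z :=
  Prod.ext rfl (proj_add_int z.2 k)

lemma aproj_eq_iff {z w : AnnCov} :
    aproj z = aproj w ↔ (z.1 = w.1 ∧ ∃ k : ℤ, w.2 = z.2 + k) := by
  constructor
  · intro hzw
    exact ⟨(Prod.ext_iff.1 hzw).1, proj_eq_proj.1 (Prod.ext_iff.1 hzw).2⟩
  · rintro ⟨h1, k, hk⟩
    show (z.1, proj z.2) = (w.1, proj w.2)
    rw [h1, hk, proj_add_int]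

lemma continuous_aproj : Continuous aproj :=
  continuous_fst.prodMk (continuous_proj.comp continuous_snd)

lemma proj_zsmul (m : ℤ) (t : ℝ) : m • proj t = proj (m * t) := by
  show m • (t : S1) = ((m * t : ℝ) : S1)
  rw [← zsmul_eq_mul]
  exact (AddCircle.coe_zsmul 1 (n := m) (x := t)).symm

end Annulus15

open Annulus15

/-- for fixed points `p`, `q` of `f`, the following are
equivalent: (1) some arc `γ` from `p` to `q` has all of its `fⁿ`-lifts starting
at `p` ending at `q`; (2) some arc `γ` from `p` to `q` satisfies `f(γ) ≃ γ` rel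
endpoints; (3) `h(p) = h(q)` for the semiconjugacy `h`. -/
theorem fixed_points_same_fiber_tfae
    (d : ℤ) (hd : 1 < |d|)
    (f : Ann → Ann) (hcov : IsCoveringMap f) (hf : Continuous f)
    (hdeg : HasDegree f d)
    (h : Ann → S1) (hhc : Continuous h) (hsemi : ∀ a, h (f a) = md d (h a))
    (hiso : ∃ e : ℤ, (e = 1 ∨ e = -1) ∧ ∃ H : AnnCov → ℝ, Continuous H ∧
      (∀ p, proj (H p) = h (aproj p)) ∧
      ∀ (x : Set.Ioo (0:ℝ) 1) (y : ℝ), H (x, y + 1) = H (x, y) + e)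
    (p q : Ann) (hp : f p = p) (hq : f q = q) :
    ((∃ γ : Path p q, ∀ n : ℕ, 0 < n →
        ∀ δ : unitInterval → Ann, Continuous δ → δ 0 = p →
          (∀ t, f^[n] (δ t) = γ t) → δ 1 = q) ↔ h p = h q) ∧
    ((∃ γ : Path p q, Path.Homotopic ((γ.map hf).cast hp.symm hq.symm) γ) ↔
      h p = h q) := by
  classical
  obtain ⟨F, hFc, hFa, hFsh⟩ := hdeg
  obtain ⟨e, he, H, hHc, hHp, hHsh⟩ := hiso
  -- scalar facts
  have hdZ : (2:ℤ) ≤ |d| := by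
    have := Int.add_one_le_of_lt hd
    linarith
  have hdne : d ≠ 0 := by
    intro hh; rw [hh] at hd; norm_num at hd
  have hdRne : ((d:ℝ)) ≠ 0 := by exact_mod_cast hdne
  have hd1R : ((d:ℝ)) - 1 ≠ 0 := by
    have : d ≠ 1 := by
      intro hh; rw [hh] at hd; norm_num at hd
    intro hh
    exact this (by exact_mod_cast (by linarith : (d:ℝ) = 1))
  have heR : (e:ℝ) ≠ 0 := by rcases he with rfl | rfl <;> norm_num
  have he2 : (e:ℝ) * (e:ℝ) = 1 := by rcases he with rfl | rfl <;> norm_num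
  -- step lemmas
  have hFstep : ∀ w : AnnCov, F (w.1, w.2 + 1) = ((F w).1, (F w).2 + (d:ℝ)) := fun w =>
    Prod.ext (hFsh w.1 w.2).1 (hFsh w.1 w.2).2
  have hHstep : ∀ w : AnnCov, H (w.1, w.2 + 1) = H w + (e:ℝ) := fun w => hHsh w.1 w.2
  have hFshift : ∀ (z : AnnCov) (k : ℤ),
      F (z.1, z.2 + (k:ℝ)) = ((F z).1, (F z).2 + (d:ℝ)*(k:ℝ)) := by
    intro z k
    induction k using Int.induction_on with
    | zero => simp
    | succ i ih =>
      push_cast at ih ⊢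
      have hstep := hFstep (z.1, z.2 + (i:ℝ))
      simp only at hstep
      have harg : z.2 + ((i:ℝ)+1) = (z.2 + (i:ℝ)) + 1 := by ring
      rw [harg, hstep, ih]
      exact Prod.ext rfl (by ring)
    | pred i ih =>
      push_cast at ih ⊢
      have hstep := hFstep (z.1, z.2 + (-(i:ℝ) - 1))
      simp only at hstep
      have harg : z.2 + (-(i:ℝ) - 1) + 1 = z.2 + (-(i:ℝ)) := by ring
      rw [harg] at hstep
      rw [ih] at hstep
      refine Prod.ext ((Prod.ext_iff.1 hstep).1.symm) ?_
      have h2 := (Prod.ext_iff.1 hstep).2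
      simp only at h2 ⊢
      linarith
  have hHshift : ∀ (z : AnnCov) (k : ℤ),
      H (z.1, z.2 + (k:ℝ)) = H z + (e:ℝ)*(k:ℝ) := by
    intro z k
    induction k using Int.induction_on with
    | zero => simp
    | succ i ih =>
      push_cast at ih ⊢
      have hstep := hHstep (z.1, z.2 + (i:ℝ))
      simp only at hstep
      have harg : z.2 + ((i:ℝ)+1) = (z.2 + (i:ℝ)) + 1 := by ring
      rw [harg, hstep, ih]; ring
    | pred i ih =>
      push_cast at ih ⊢
      have hstep := hHstep (z.1, z.2 + (-(i:ℝ) - 1))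
      simp only at hstep
      have harg : z.2 + (-(i:ℝ) - 1) + 1 = z.2 + (-(i:ℝ)) := by ring
      rw [harg] at hstep
      rw [ih] at hstep
      linarith
  -- the constant c with H∘F = d·H + c
  have hint : ∀ z : AnnCov, ∃ k : ℤ, H (F z) - (d:ℝ) * H z = k := by
    intro z
    have h4 : proj ((d:ℝ) * H z) = proj (H (F z)) := by
      rw [hHp (F z), hFa, hsemi (aproj z), ← hHp z]
      show proj ((d:ℝ) * H z) = (d:ℤ) • proj (H z)
      rw [proj_zsmul]
    obtain ⟨k, hk⟩ := proj_eq_proj.1 h4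
    exact ⟨k, by rw [hk]; ring⟩
  have z₀ : AnnCov := (⟨1/2, by norm_num⟩, 0)
  have hc : ∀ z, H (F z) = (d:ℝ)*H z + (H (F z₀) - (d:ℝ)*H z₀) := by
    intro z
    have := int_valued_const (fun z : AnnCov => H (F z) - (d:ℝ)*H z)
      ((hHc.comp hFc).sub (continuous_const.mul hHc)) hint z z₀
    linarith
  set c : ℝ := H (F z₀) - (d:ℝ)*H z₀ with hcdef
  -- iterates
  have hFna : ∀ (n : ℕ) (z : AnnCov), aproj (F^[n] z) = f^[n] (aproj z) := by
    intro n
    induction n with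
    | zero => intro z; simp
    | succ n ih =>
      intro z
      rw [Function.iterate_succ_apply', Function.iterate_succ_apply', hFa, ih]
  have hcn : ∀ n : ℕ, ∃ cn : ℝ, ∀ z, H (F^[n] z) = (d:ℝ)^n * H z + cn := by
    intro n
    induction n with
    | zero => exact ⟨0, fun z => by simp⟩
    | succ n ih =>
      obtain ⟨cn, hcnz⟩ := ih
      refine ⟨(d:ℝ)*cn + c, fun z => ?_⟩
      rw [Function.iterate_succ_apply', hc, hcnz]
      ring
  -- winds of fixed-point lifts
  have getj : ∀ (n : ℕ) (cn : ℝ), (∀ z, H (F^[n] z) = (d:ℝ)^n * H z + cn) →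
      ∀ z : AnnCov, f^[n] (aproj z) = aproj z →
      ∃ j : ℤ, F^[n] z = (z.1, z.2 + (j:ℝ)) ∧ (e:ℝ)*j = ((d:ℝ)^n - 1) * H z + cn := by
    intro n cn hcnz z hzfix
    have h1 : aproj z = aproj (F^[n] z) := by rw [hFna n z, hzfix]
    obtain ⟨hfst, k, hk⟩ := aproj_eq_iff.1 h1
    have hpair : F^[n] z = (z.1, z.2 + (k:ℝ)) := Prod.ext hfst.symm hk
    refine ⟨k, hpair, ?_⟩
    have h2 : H (F^[n] z) = H z + (e:ℝ)*k := by rw [hpair]; exact hHshift z k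
    have h3 : H (F^[n] z) = (d:ℝ)^n * H z + cn := hcnz z
    linarith
  have hc1 : ∀ z, H (F^[1] z) = (d:ℝ)^1 * H z + c := by
    intro z
    rw [Function.iterate_one, pow_one]
    exact hc z
  -- injectivity of F
  have Finj : Function.Injective F := by
    intro z₁ z₂ hz12
    set w : Ann := f (aproj z₁) with hw
    have hFz1 : aproj (F z₁) = w := hFa z₁
    have hcontα : Continuous fun t : unitInterval => f (aproj (mix ((t:ℝ)) z₁ z₂)) :=
      hf.comp (continuous_aproj.comp
        (mix_continuous continuous_subtype_val continuous_const continuous_const))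
    set α : Path w w :=
      { toFun := fun t => f (aproj (mix ((t:ℝ)) z₁ z₂))
        continuous_toFun := hcontα
        source' := by
          show f (aproj (mix ((0:ℝ)) z₁ z₂)) = w
          rw [mix_zero]
        target' := by
          show f (aproj (mix ((1:ℝ)) z₁ z₂)) = w
          rw [mix_one, hw, ← hFa, ← hFa, hz12] } with hα
    have hKcont : Continuous fun st : unitInterval × unitInterval =>
        aproj (mix ((st.1:ℝ)) (F (mix ((st.2:ℝ)) z₁ z₂)) (F z₁)) := by
      apply continuous_aproj.comp
      apply mix_continuous (continuous_subtype_val.comp continuous_fst) ?_ continuous_const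
      exact hFc.comp (mix_continuous (continuous_subtype_val.comp continuous_snd)
        continuous_const continuous_const)
    have hhom : Path.Homotopic α (Path.refl w) := by
      refine ⟨{
        toFun := fun st => aproj (mix ((st.1:ℝ)) (F (mix ((st.2:ℝ)) z₁ z₂)) (F z₁))
        continuous_toFun := hKcont
        map_zero_left := ?_
        map_one_left := ?_
        prop' := ?_ }⟩
      · intro t
        show aproj (mix ((0:ℝ)) _ _) = _
        rw [mix_zero, hFa]
        rfl
      · intro t
        show aproj (mix ((1:ℝ)) _ _) = _
        rw [mix_one, hFz1]
        rfl
      · intro s x hx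
        have hx01 : x = 0 ∨ x = 1 := hx
        rcases hx01 with rfl | rfl
        · show aproj (mix _ (F (mix ((0:ℝ)) z₁ z₂)) (F z₁)) = α.toContinuousMap 0
          rw [mix_zero, mix_self]
          show aproj (F z₁) = α 0
          rw [hFz1, α.source]
        · show aproj (mix _ (F (mix ((1:ℝ)) z₁ z₂)) (F z₁)) = α.toContinuousMap 1
          rw [mix_one, hz12.symm, mix_self]
          show aproj (F z₁) = α 1
          rw [hFz1, α.target]
    have hend := lift_homotopic_end hcov α (Path.refl w) hhom
      (fun r => aproj (mix r z₁ z₂)) (fun _ => aproj z₁)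
      (continuous_aproj.comp (mix_continuous continuous_id continuous_const continuous_const))
      continuous_const
      (fun r => by
        show f (aproj (mix r z₁ z₂)) = f (aproj (mix ((pr01 r : unitInterval):ℝ) z₁ z₂))
        rw [mix_pr])
      (fun r => by
        show f (aproj z₁) = (Path.refl w) (pr01 r)
        rw [Path.refl_apply])
      (by show aproj (mix (0:ℝ) z₁ z₂) = aproj z₁; rw [mix_zero])
    have h12 : aproj z₁ = aproj z₂ := by
      have hh : aproj (mix (1:ℝ) z₁ z₂) = aproj z₁ := hend
      rw [mix_one] at hh
      exact hh.symm
    obtain ⟨h1, m, hm⟩ := aproj_eq_iff.1 h12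
    have hz2 : z₂ = (z₁.1, z₁.2 + (m:ℝ)) := Prod.ext h1.symm hm
    rw [hz2, hFshift z₁ m] at hz12
    have h2 := (Prod.ext_iff.1 hz12).2
    simp only at h2
    have hm0 : (m:ℝ) = 0 := by
      rcases mul_eq_zero.1 (by linarith : (d:ℝ)*(m:ℝ) = 0) with hh | hh
      · exact absurd hh hdRne
      · exact hh
    rw [hz2]
    refine Prod.ext rfl ?_
    simp only
    rw [hm0, add_zero]
  -- base point over p
  set pt : AnnCov := (p.1, Quotient.out p.2) with hptdef
  have hpt : aproj pt = p := Prod.ext rfl (Quotient.out_eq p.2)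
  have hptfix : f (aproj pt) = aproj pt := by rw [hpt, hp]
  -- lifting an arbitrary path from p to q
  have lift_data : ∀ γ : Path p q, ∃ Γ : ℝ → AnnCov, Continuous Γ ∧
      (∀ r, aproj (Γ r) = γ (pr01 r)) ∧ Γ 0 = pt ∧ aproj (Γ 1) = q := by
    intro γ
    obtain ⟨Γ, hΓc, hΓf, hΓ0⟩ := liftPathR isCoveringMap_aproj (fun r => γ (pr01 r))
      (γ.continuous.comp continuous_pr01) pt
      (by show aproj pt = γ (pr01 0); rw [hpt, pr01_zero, γ.source])
    refine ⟨Γ, hΓc, fun r => ?_, hΓ0, ?_⟩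
    · rw [hΓf]
      show γ (pr01 (clamp 0 1 r)) = γ (pr01 r)
      rw [pr01_clamp]
    · rw [hΓf]
      show γ (pr01 (clamp 0 1 1)) = q
      rw [pr01_clamp, pr01_one, γ.target]
  -- given a lift endpoint over q, basic wind identities
  have wind : ∀ qt : AnnCov, aproj qt = q →
      ∃ jp jq : ℤ, F pt = (pt.1, pt.2 + (jp:ℝ)) ∧ F qt = (qt.1, qt.2 + (jq:ℝ)) ∧
        (e:ℝ)*((jq:ℝ) - (jp:ℝ)) = ((d:ℝ) - 1) * (H qt - H pt) := by
    intro qt hqt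
    obtain ⟨jp, hjp, hjpid⟩ := getj 1 c hc1 pt (by rw [Function.iterate_one]; exact hptfix)
    obtain ⟨jq, hjq, hjqid⟩ := getj 1 c hc1 qt
      (by rw [Function.iterate_one, hqt, hq])
    rw [Function.iterate_one] at hjp hjq
    rw [pow_one] at hjpid hjqid
    exact ⟨jp, jq, hjp, hjq, by push_cast; nlinarith [hjpid, hjqid]⟩
  -- conclusion template: H qt = H pt gives h p = h q
  have conclude : ∀ qt : AnnCov, aproj qt = q → H qt = H pt → h p = h q := by
    intro qt hqt hH
    rw [← hpt, ← hqt, ← hHp pt, ← hHp qt, hH]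
  ------------------------------------------------------------------
  -- Direction (1) → (3)
  have dir13 : (∃ γ : Path p q, ∀ n : ℕ, 0 < n →
      ∀ δ : unitInterval → Ann, Continuous δ → δ 0 = p →
        (∀ t, f^[n] (δ t) = γ t) → δ 1 = q) → h p = h q := by
    rintro ⟨γ, P⟩
    obtain ⟨Γ, hΓc, hΓf, hΓ0, hΓ1⟩ := lift_data γ
    set qt : AnnCov := Γ 1 with hqtdef
    obtain ⟨jp, jq, hjp, hjq, hwind⟩ := wind qt hΓ1
    obtain ⟨s, hsdef⟩ : ∃ s : ℤ, s = jq - jp := ⟨_, rfl⟩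
    obtain ⟨n, hndef⟩ : ∃ n : ℕ, n = s.natAbs + 1 := ⟨_, rfl⟩
    obtain ⟨cn, hcnz⟩ := hcn n
    -- existence of an f^[n]-lift of γ starting at p
    have lifts : ∀ m : ℕ, ∃ δ : ℝ → Ann, Continuous δ ∧ δ 0 = p ∧
        ∀ r, f^[m] (δ r) = γ (pr01 r) := by
      intro m
      induction m with
      | zero =>
        refine ⟨fun r => γ (pr01 r), γ.continuous.comp continuous_pr01, ?_, fun r => rfl⟩
        show γ (pr01 0) = p
        rw [pr01_zero, γ.source]
      | succ m ih =>
        obtain ⟨δm, hδmc, hδm0, hδml⟩ := ih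
        obtain ⟨δ', hδ'c, hδ'l, hδ'0⟩ := liftPathR hcov δm hδmc p (by rw [hδm0, hp])
        refine ⟨δ', hδ'c, hδ'0, fun r => ?_⟩
        rw [Function.iterate_succ_apply, hδ'l, hδml, pr01_clamp]
    obtain ⟨δn, hδnc, hδn0, hδnl⟩ := lifts n
    -- the hypothesis forces the endpoint
    have hδ1 : δn 1 = q := by
      have := P n (by omega) (fun t => δn (t:ℝ))
        (hδnc.comp continuous_subtype_val)
        (by show δn ((0:unitInterval):ℝ) = p; exact hδn0)
        (fun t => by
          show f^[n] (δn (t:ℝ)) = γ t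
          rw [hδnl, pr01_coe])
      exact this
    -- lift δn to the covering
    obtain ⟨Δ, hΔc, hΔl, hΔ0⟩ := liftPathR isCoveringMap_aproj δn hδnc pt (by rw [hpt, hδn0])
    obtain ⟨jn, hjn, hjnid⟩ := getj n cn hcnz pt
      (by rw [hpt]; exact Function.iterate_fixed hp n)
    -- uniqueness of lifts of γ over aproj
    have hAB : (fun r => F^[n] (Δ r)) = fun r => ((Γ r).1, (Γ r).2 + (jn:ℝ)) := by
      refine isCoveringMap_aproj.eq_of_comp_eq
        ((hFc.iterate n).comp hΔc)
        ((hΓc.fst.subtype_val.subtype_mk _).prodMk (hΓc.snd.add continuous_const))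
        (funext fun r => ?_) (0:ℝ) ?_
      · show aproj (F^[n] (Δ r)) = aproj ((Γ r).1, (Γ r).2 + (jn:ℝ))
        rw [hFna, hΔl, aproj_shift (Γ r) jn, hΓf]
        show f^[n] (δn (clamp 0 1 r)) = γ (pr01 r)
        rw [hδnl, pr01_clamp]
      · show F^[n] (Δ 0) = ((Γ 0).1, (Γ 0).2 + (jn:ℝ))
        rw [hΔ0, hΓ0, hjn]
    have hend : F^[n] (Δ 1) = (qt.1, qt.2 + (jn:ℝ)) := by
      have := congrFun hAB 1
      rw [this]
    -- Δ 1 lies over q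
    have hΔ1q : aproj (Δ 1) = aproj qt := by
      rw [hΔl]
      show δn (clamp 0 1 1) = aproj qt
      rw [clamp01_one, hδ1, hΓ1]
    obtain ⟨hfst, kn, hkn⟩ := aproj_eq_iff.1 (hΔ1q.symm)
    have hΔ1 : Δ 1 = (qt.1, qt.2 + (kn:ℝ)) := Prod.ext hfst.symm hkn
    -- H computations
    have hHe1 : H qt + (e:ℝ)*(jn:ℝ) = (d:ℝ)^n * (H qt + (e:ℝ)*(kn:ℝ)) + cn := by
      have h1 : H (F^[n] (Δ 1)) = (d:ℝ)^n * H (Δ 1) + cn := hcnz (Δ 1)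
      rw [hend, hΔ1] at h1
      rw [hHshift qt jn, hHshift qt kn] at h1
      linarith
    have hHe2 : H pt + (e:ℝ)*(jn:ℝ) = (d:ℝ)^n * H pt + cn := by
      have h1 := hjnid
      have h2 : H (F^[n] pt) = H pt + (e:ℝ)*(jn:ℝ) := by rw [hjn]; exact hHshift pt jn
      have h3 : H (F^[n] pt) = (d:ℝ)^n * H pt + cn := hcnz pt
      linarith
    have hkey : H qt - H pt = (d:ℝ)^n * ((H qt - H pt) + (e:ℝ)*(kn:ℝ)) := by
      linear_combination hHe1 - hHe2
    -- integer equation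
    have hZ : (s:ℝ) = ((d:ℤ)^n : ℤ) * ((s:ℝ) + ((d:ℝ)-1)*(kn:ℝ)) := by
      have h1 : (e:ℝ) * (s:ℝ) = ((d:ℝ)-1) * (H qt - H pt) := by
        rw [hsdef]; push_cast; exact hwind
      have h2 : (e:ℝ) * (s:ℝ) = (d:ℝ)^n * ((e:ℝ)*(s:ℝ) + ((d:ℝ)-1)*(e:ℝ)*(kn:ℝ)) := by
        rw [h1]
        linear_combination ((d:ℝ)-1) * hkey
      have h3 : (e:ℝ) * (s:ℝ) = (e:ℝ) * ((d:ℝ)^n * ((s:ℝ) + ((d:ℝ)-1)*(kn:ℝ))) := by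
        rw [h2]; ring
      have h4 := mul_left_cancel₀ heR h3
      push_cast
      exact h4
    have hZint : s = d^n * (s + (d-1)*kn) := by exact_mod_cast hZ
    have hs0 : s = 0 := by
      by_contra hs
      have hdvd : (d:ℤ)^n ∣ s := ⟨s + (d-1)*kn, hZint⟩
      have habs : |(d:ℤ)|^n ≤ |s| := by
        have hdvd2 : |(d:ℤ)^n| ∣ |s| := (abs_dvd _ _).2 ((dvd_abs _ _).2 hdvd)
        have hle := Int.le_of_dvd (abs_pos.2 hs) hdvd2
        rwa [abs_pow] at hle
      have h2n : (2:ℤ)^n ≤ |(d:ℤ)|^n := pow_le_pow_left₀ (by norm_num) hdZ n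
      have hlt : |s| < (2:ℤ)^n := by
        have hnat : s.natAbs < 2^n := by
          calc s.natAbs < 2^(s.natAbs) := Nat.lt_two_pow_self
          _ ≤ 2^n := Nat.pow_le_pow_right (by norm_num) (by omega)

        have hcast : (s.natAbs : ℤ) < (2:ℤ)^n := by exact_mod_cast hnat
        rwa [Int.abs_eq_natAbs]
      linarith
    -- hence H qt = H pt
    have ht0 : H qt - H pt = 0 := by
      have h1 : (e:ℝ) * (s:ℝ) = ((d:ℝ)-1) * (H qt - H pt) := by
        rw [hsdef]; push_cast; exact hwind
      have h2 : ((d:ℝ)-1) * (H qt - H pt) = 0 := by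
        rw [← h1, hs0]
        norm_num
      rcases mul_eq_zero.1 h2 with hh | hh
      · exact absurd hh hd1R
      · exact hh
    exact conclude qt hΓ1 (by linarith)
  ------------------------------------------------------------------
  -- Direction (2) → (3)
  have dir23 : (∃ γ : Path p q, Path.Homotopic ((γ.map hf).cast hp.symm hq.symm) γ)
      → h p = h q := by
    rintro ⟨γ, hhom⟩
    obtain ⟨Γ, hΓc, hΓf, hΓ0, hΓ1⟩ := lift_data γ
    set qt : AnnCov := Γ 1 with hqtdef
    obtain ⟨jp, jq, hjp, hjq, hwind⟩ := wind qt hΓ1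
    have hend := lift_homotopic_end isCoveringMap_aproj
      ((γ.map hf).cast hp.symm hq.symm) γ hhom
      (fun r => F (Γ r)) (fun r => ((Γ r).1, (Γ r).2 + (jp:ℝ)))
      (hFc.comp hΓc)
      ((hΓc.fst.subtype_val.subtype_mk _).prodMk (hΓc.snd.add continuous_const))
      (fun r => by
        show aproj (F (Γ r)) = _
        rw [hFa, hΓf]
        rw [Path.cast_coe, Path.map_coe]
        rfl)
      (fun r => by
        show aproj ((Γ r).1, (Γ r).2 + (jp:ℝ)) = _
        rw [aproj_shift, hΓf])
      (by
        show F (Γ 0) = ((Γ 0).1, (Γ 0).2 + (jp:ℝ))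
        rw [hΓ0, hjp])
    have hjqjp : (jq:ℝ) = (jp:ℝ) := by
      have h1 : F qt = (qt.1, qt.2 + (jp:ℝ)) := hend
      rw [hjq] at h1
      have h2 := (Prod.ext_iff.1 h1).2
      simp only at h2
      linarith
    have ht0 : H qt - H pt = 0 := by
      rw [hjqjp] at hwind
      simp only [sub_self, mul_zero] at hwind
      rcases mul_eq_zero.1 hwind.symm with hh | hh
      · exact absurd hh hd1R
      · exact hh
    exact conclude qt hΓ1 (by linarith)
  ------------------------------------------------------------------
  -- Direction (3) → constructions
  have build : h p = h q → ∃ qt : AnnCov, aproj qt = q ∧ H qt = H pt := by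
    intro hpq
    set qt0 : AnnCov := (q.1, Quotient.out q.2) with hqt0def
    have hqt0 : aproj qt0 = q := Prod.ext rfl (Quotient.out_eq q.2)
    have hHq : proj (H pt) = proj (H qt0) := by
      rw [hHp pt, hHp qt0, hpt, hqt0, hpq]
    obtain ⟨m, hm⟩ := proj_eq_proj.1 hHq
    refine ⟨(qt0.1, qt0.2 + ((-(e*m) : ℤ):ℝ)), ?_, ?_⟩
    · rw [aproj_shift, hqt0]
    · rw [hHshift qt0 (-(e*m))]
      have hcast : ((-(e*m) : ℤ):ℝ) = -((e:ℝ)*(m:ℝ)) := by push_cast; ring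
      rw [hcast, hm]
      linear_combination (-(m:ℝ)) * he2
  ------------------------------------------------------------------
  -- Direction (3) → (2)
  have dir32 : h p = h q → ∃ γ : Path p q,
      Path.Homotopic ((γ.map hf).cast hp.symm hq.symm) γ := by
    intro hpq
    obtain ⟨qt, hqt, hHqt⟩ := build hpq
    have hγcont : Continuous fun t : unitInterval => aproj (mix ((t:ℝ)) pt qt) :=
      continuous_aproj.comp
        (mix_continuous continuous_subtype_val continuous_const continuous_const)
    set γ : Path p q :=
      { toFun := fun t => aproj (mix ((t:ℝ)) pt qt)
        continuous_toFun := hγcont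
        source' := by show aproj (mix ((0:ℝ)) pt qt) = p; rw [mix_zero, hpt]
        target' := by show aproj (mix ((1:ℝ)) pt qt) = q; rw [mix_one, hqt] } with hγdef
    obtain ⟨jp, jq, hjp, hjq, hwind⟩ := wind qt hqt
    have hjqjp : jq = jp := by
      have h0 : (e:ℝ) * ((jq:ℝ) - jp) = 0 := by rw [hwind, hHqt]; ring
      have h1 : (jq:ℝ) - jp = 0 := by
        rcases mul_eq_zero.1 h0 with hh | hh
        · exact absurd hh heR
        · exact hh
      have h2 : (jq:ℝ) = jp := by linarith
      exact_mod_cast h2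
    set A : ℝ → AnnCov := fun r => F (mix r pt qt) with hA
    set B : ℝ → AnnCov := fun r => ((mix r pt qt).1, (mix r pt qt).2 + (jp:ℝ)) with hB
    have hA0B0 : A 0 = B 0 := by
      show F (mix (0:ℝ) pt qt) = ((mix (0:ℝ) pt qt).1, (mix (0:ℝ) pt qt).2 + (jp:ℝ))
      rw [mix_zero]
      exact hjp
    have hA1B1 : A 1 = B 1 := by
      show F (mix (1:ℝ) pt qt) = ((mix (1:ℝ) pt qt).1, (mix (1:ℝ) pt qt).2 + (jp:ℝ))
      rw [mix_one, ← hjqjp]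
      exact hjq
    have hMcont : Continuous fun st : unitInterval × unitInterval =>
        mix ((st.2:ℝ)) pt qt :=
      mix_continuous (continuous_subtype_val.comp continuous_snd)
        continuous_const continuous_const
    refine ⟨γ, ⟨{
      toFun := fun st => aproj (mix ((st.1:ℝ)) (A ((st.2:ℝ))) (B ((st.2:ℝ))))
      continuous_toFun := ?_
      map_zero_left := ?_
      map_one_left := ?_
      prop' := ?_ }⟩⟩
    · apply continuous_aproj.comp
      exact mix_continuous (continuous_subtype_val.comp continuous_fst)
        (hFc.comp hMcont) ((hMcont.fst).prodMk (hMcont.snd.add continuous_const))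
    · intro t
      show aproj (mix ((0:ℝ)) (A ((t:ℝ))) (B ((t:ℝ)))) = _
      rw [mix_zero]
      show aproj (F (mix ((t:ℝ)) pt qt)) = _
      rw [hFa]
      rfl
    · intro t
      show aproj (mix ((1:ℝ)) (A ((t:ℝ))) (B ((t:ℝ)))) = _
      rw [mix_one]
      show aproj ((mix ((t:ℝ)) pt qt).1, (mix ((t:ℝ)) pt qt).2 + (jp:ℝ)) = _
      rw [aproj_shift]
      rfl
    · intro sx x hx
      have hx01 : x = 0 ∨ x = 1 := hx
      rcases hx01 with rfl | rfl
      · show aproj (mix ((sx:ℝ)) (A ((0:ℝ))) (B ((0:ℝ)))) = _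
        rw [← hA0B0, mix_self]
        show aproj (F (mix ((0:ℝ)) pt qt)) = _
        rw [mix_zero, hFa, hpt]
        exact hp.trans (Path.source _).symm
      · show aproj (mix ((sx:ℝ)) (A ((1:ℝ))) (B ((1:ℝ)))) = _
        rw [← hA1B1, mix_self]
        show aproj (F (mix ((1:ℝ)) pt qt)) = _
        rw [mix_one, hFa, hqt]
        exact hq.trans (Path.target _).symm
  ------------------------------------------------------------------
  -- Direction (3) → (1)
  have dir31 : h p = h q → ∃ γ : Path p q, ∀ n : ℕ, 0 < n →
      ∀ δ : unitInterval → Ann, Continuous δ → δ 0 = p →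
        (∀ t, f^[n] (δ t) = γ t) → δ 1 = q := by
    intro hpq
    obtain ⟨qt, hqt, hHqt⟩ := build hpq
    have hγcont : Continuous fun t : unitInterval => aproj (mix ((t:ℝ)) pt qt) :=
      continuous_aproj.comp
        (mix_continuous continuous_subtype_val continuous_const continuous_const)
    refine ⟨{
      toFun := fun t => aproj (mix ((t:ℝ)) pt qt)
      continuous_toFun := hγcont
      source' := by show aproj (mix ((0:ℝ)) pt qt) = p; rw [mix_zero, hpt]
      target' := by show aproj (mix ((1:ℝ)) pt qt) = q; rw [mix_one, hqt] }, ?_⟩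
    intro n hn δ hδc hδ0 hδl
    obtain ⟨cn, hcnz⟩ := hcn n
    obtain ⟨jn, hjn, hjnid⟩ := getj n cn hcnz pt
      (by rw [hpt]; exact Function.iterate_fixed hp n)
    obtain ⟨jn', hjn', hjnid'⟩ := getj n cn hcnz qt
      (by rw [hqt]; exact Function.iterate_fixed hq n)
    have hjneq : jn' = jn := by
      have h2 : (jn':ℝ) = (jn:ℝ) :=
        mul_left_cancel₀ heR (by rw [hjnid', hjnid, hHqt])
      exact_mod_cast h2
    obtain ⟨Δ, hΔc, hΔl2, hΔ0⟩ := liftPathR isCoveringMap_aproj (fun r => δ (pr01 r))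
      (hδc.comp continuous_pr01) pt
      (by show aproj pt = δ (pr01 0); rw [hpt, pr01_zero, hδ0])
    have hMc : Continuous fun r : ℝ => mix r pt qt :=
      mix_continuous continuous_id continuous_const continuous_const
    have hAB : (fun r => F^[n] (Δ r))
        = fun r => ((mix r pt qt).1, (mix r pt qt).2 + (jn:ℝ)) := by
      refine isCoveringMap_aproj.eq_of_comp_eq ((hFc.iterate n).comp hΔc)
        ((hMc.fst).prodMk (hMc.snd.add continuous_const))
        (funext fun r => ?_) (0:ℝ) ?_
      · show aproj (F^[n] (Δ r)) = aproj ((mix r pt qt).1, (mix r pt qt).2 + (jn:ℝ))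
        rw [hFna, hΔl2, aproj_shift]
        show f^[n] (δ (pr01 (clamp 0 1 r))) = aproj (mix r pt qt)
        rw [pr01_clamp, hδl (pr01 r)]
        show aproj (mix ((pr01 r : unitInterval):ℝ) pt qt) = aproj (mix r pt qt)
        rw [mix_pr]
      · show F^[n] (Δ 0) = ((mix (0:ℝ) pt qt).1, (mix (0:ℝ) pt qt).2 + (jn:ℝ))
        rw [hΔ0]
        conv_rhs => rw [mix_zero]
        exact hjn
    have hend : F^[n] (Δ 1) = (qt.1, qt.2 + (jn:ℝ)) := by
      have hh := congrFun hAB 1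
      rw [hh, mix_one]
    have hFq : F^[n] qt = (qt.1, qt.2 + (jn:ℝ)) := by rw [hjn', hjneq]
    have hΔ1 : Δ 1 = qt := Finj.iterate n (hend.trans hFq.symm)
    have hlast : aproj (Δ 1) = δ 1 := by
      rw [hΔl2]
      show δ (pr01 (clamp 0 1 1)) = δ 1
      rw [pr01_clamp, pr01_one]
    rw [hΔ1, hqt] at hlast
    exact hlast.symm
  exact ⟨⟨dir13, dir31⟩, ⟨dir23, dir32⟩⟩
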